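/- Let A be a principal ideal domain of characteristic ≠ 3. The binary cubic form f(x,y) = ax^3 + bx^2y + cxy^2 + dy^3 over A is the index form of a unique cubic A-algebra C = A·1 ⊕ A·ξ ⊕ A·η with multiplication table ξη = -ad, ξ^2 = -ac + bξ - aη, η^2 = -bd + dξ - cη, and this C is a commutative associative A-algebra. -/
import Mathlib


/-- The multiplication on `A³ = A·1 ⊕ A·ξ ⊕ A·η` determined by the table
`ξη = -ad`, `ξ² = -ac + bξ - aη`, `η² = -bd + dξ - cη`, extended `A`-bilinearly.
An element `(p, q, r)` represents `p + q·ξ + r·η`. -/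
def cubicMul {A : Type*} [CommRing A] (a b c d : A) :
    A × A × A → A × A × A → A × A × A := fun p q =>
  (p.1 * q.1 - a * c * (p.2.1 * q.2.1) - b * d * (p.2.2 * q.2.2)
      - a * d * (p.2.1 * q.2.2 + p.2.2 * q.2.1),
    p.1 * q.2.1 + p.2.1 * q.1 + b * (p.2.1 * q.2.1) + d * (p.2.2 * q.2.2),
    p.1 * q.2.2 + p.2.2 * q.1 - a * (p.2.1 * q.2.1) - c * (p.2.2 * q.2.2))

/-- **Levi–Delone–Faddeev–Gross.** Over a PID `A` of characteristic `≠ 3`, the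
binary cubic form `a·x³ + b·x²y + c·xy² + d·y³` is the index form of the cubic
`A`-algebra `C = A·1 ⊕ A·ξ ⊕ A·η` with multiplication table `ξη = -ad`,
`ξ² = -ac + bξ - aη`, `η² = -bd + dξ - cη`; this multiplication is commutative,
associative, bilinear, with identity `1 = (1,0,0)`, its index form is `f`, and it
is the unique bilinear multiplication with this table. -/
theorem cubic_ring_of_form
    (A : Type*) [CommRing A] [IsDomain A] [IsPrincipalIdealRing A]
    (hchar : ringChar A ≠ 3) (a b c d : A) :
    (∀ p q, cubicMul a b c d p q = cubicMul a b c d q p) ∧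
    (∀ p q r, cubicMul a b c d (cubicMul a b c d p q) r
        = cubicMul a b c d p (cubicMul a b c d q r)) ∧
    (∀ p, cubicMul a b c d (1, 0, 0) p = p) ∧
    (∀ p q r, cubicMul a b c d (p + q) r
        = cubicMul a b c d p r + cubicMul a b c d q r) ∧
    (∀ (s : A) p q, cubicMul a b c d (s • p) q = s • cubicMul a b c d p q) ∧
    (∀ x y : A,
      (cubicMul a b c d (0, x, y) (0, x, y)).2.1 * y
          - (cubicMul a b c d (0, x, y) (0, x, y)).2.2 * x
        = a * x ^ 3 + b * x ^ 2 * y + c * x * y ^ 2 + d * y ^ 3) ∧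
    (∀ mul' : A × A × A → A × A × A → A × A × A,
      (∀ p q r, mul' (p + q) r = mul' p r + mul' q r) →
      (∀ p q r, mul' p (q + r) = mul' p q + mul' p r) →
      (∀ (s : A) p q, mul' (s • p) q = s • mul' p q) →
      (∀ (s : A) p q, mul' p (s • q) = s • mul' p q) →
      (∀ p, mul' (1, 0, 0) p = p) →
      (∀ p, mul' p (1, 0, 0) = p) →
      mul' (0, 1, 0) (0, 1, 0) = (-(a * c), b, -a) →
      mul' (0, 0, 1) (0, 0, 1) = (-(b * d), d, -c) →
      mul' (0, 1, 0) (0, 0, 1) = (-(a * d), 0, 0) →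
      mul' (0, 0, 1) (0, 1, 0) = (-(a * d), 0, 0) →
      mul' = cubicMul a b c d) := by
  refine ⟨?_, ?_, ?_, ?_, ?_, ?_, ?_⟩
  · intro p q; simp only [cubicMul, Prod.mk.injEq]; refine ⟨by ring, by ring, by ring⟩
  · intro p q r; simp only [cubicMul, Prod.mk.injEq]; refine ⟨by ring, by ring, by ring⟩
  · intro p; simp [cubicMul]
  · intro p q r
    simp only [cubicMul, Prod.mk.injEq, Prod.fst_add, Prod.snd_add, Prod.mk_add_mk]
    refine ⟨by ring, by ring, by ring⟩
  · intro s p q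
    simp only [cubicMul, Prod.mk.injEq, Prod.smul_mk, Prod.smul_fst, Prod.smul_snd,
      smul_eq_mul]
    refine ⟨by ring, by ring, by ring⟩
  · intro x y; simp only [cubicMul]; ring
  · intro m addl addr smull smulr onel oner h1 h2 h3 h4
    funext p q
    obtain ⟨p1, p2, p3⟩ := p
    obtain ⟨q1, q2, q3⟩ := q
    have hp : (p1, p2, p3) = p1 • ((1:A),(0:A),(0:A)) + p2 • ((0:A),(1:A),(0:A))
        + p3 • ((0:A),(0:A),(1:A)) := by
      simp [Prod.ext_iff]
    have hq : (q1, q2, q3) = q1 • ((1:A),(0:A),(0:A)) + q2 • ((0:A),(1:A),(0:A))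
        + q3 • ((0:A),(0:A),(1:A)) := by
      simp [Prod.ext_iff]
    rw [hp, hq]
    rw [addl, addl, addr, addr, addr, addr, addr, addr]
    simp only [smull, smulr, h1, h2, h3, h4, onel, oner]
    simp only [cubicMul, Prod.smul_mk, Prod.mk_add_mk, smul_eq_mul, Prod.mk.injEq,
      mul_zero, mul_one, zero_mul, one_mul, add_zero, zero_add, mul_neg, neg_zero]
    refine ⟨by ring, by ring, by ring⟩
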